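/- arXiv:1307.2794 — 3 statements merged into one kernel-verified Lean document; each statement's English description precedes it below -/
import Mathlib

section
/- Let $Q$ be a measurable set, $p : Q \to (1,\infty)$ measurable with $1 < p^- \leq p^+ < \infty$, and set $\mathcal{V} = L^{p(x)}(Q)$ with Luxemburg norm. Then for every $v \in \mathcal{V}$, the function $Zv := |v|^{p(x)-2}v$ belongs to $L^{p'(x)}(Q)$ and satisfies $\| |v|^{p(x)-2}v \|_{L^{p'(x)}(Q)} \leq (\|v\|_{L^{p(x)}(Q)} + 1)^{p^+ - 1}$. -/
open MeasureTheory Filter Set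
open scoped ENNReal Topology

noncomputable section

/-- The modular of a variable exponent Lebesgue space. -/
def vModular {α : Type*} [MeasurableSpace α] (μ : Measure α) (p : α → ℝ) (u : α → ℝ) : ℝ≥0∞ :=
  ∫⁻ x, ENNReal.ofReal (|u x| ^ p x) ∂μ

/-- Membership in the variable exponent Lebesgue space `L^{p(x)}`. -/
def MemVLp {α : Type*} [MeasurableSpace α] (μ : Measure α) (p : α → ℝ) (u : α → ℝ) : Prop :=
  AEMeasurable u μ ∧ vModular μ p u < ⊤

/-- The Luxemburg norm on the variable exponent Lebesgue space. -/
def luxNorm {α : Type*} [MeasurableSpace α] (μ : Measure α) (p : α → ℝ) (u : α → ℝ) : ℝ :=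
  sInf {lam : ℝ | 0 < lam ∧ vModular μ p (fun x => u x / lam) ≤ 1}

/-- The admissible set for the Luxemburg norm of `v` is nonempty. -/
lemma lux_set_nonempty {α : Type*} [MeasurableSpace α] (μ : Measure α)
    (p : α → ℝ) (pm : ℝ) (hpm : 0 < pm) (hae : ∀ᵐ x ∂μ, pm ≤ p x)
    (v : α → ℝ) (hmeas : AEMeasurable (fun x => ENNReal.ofReal (|v x| ^ p x)) μ)
    (hfin : vModular μ p v < ⊤) :
    {lam : ℝ | 0 < lam ∧ vModular μ p (fun x => v x / lam) ≤ 1}.Nonempty := by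
  set M : ℝ≥0∞ := vModular μ p v with hM
  set lam : ℝ := max 1 (M.toReal ^ (1 / pm)) with hlam
  have hlam1 : (1 : ℝ) ≤ lam := le_max_left _ _
  have hlam0 : (0 : ℝ) < lam := lt_of_lt_of_le one_pos hlam1
  have hlampm : M.toReal ≤ lam ^ pm := by
    calc M.toReal = (M.toReal ^ (1 / pm)) ^ pm := by
          rw [← Real.rpow_mul ENNReal.toReal_nonneg, one_div_mul_cancel hpm.ne',
            Real.rpow_one]
      _ ≤ lam ^ pm :=
          Real.rpow_le_rpow (Real.rpow_nonneg ENNReal.toReal_nonneg _) (le_max_right _ _)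
            hpm.le
  refine ⟨lam, hlam0, ?_⟩
  have hbound : vModular μ p (fun x => v x / lam) ≤ M * ENNReal.ofReal ((lam ^ pm)⁻¹) := by
    have : vModular μ p (fun x => v x / lam)
        ≤ ∫⁻ x, ENNReal.ofReal (|v x| ^ p x) * ENNReal.ofReal ((lam ^ pm)⁻¹) ∂μ := by
      refine lintegral_mono_ae ?_
      filter_upwards [hae] with x hx
      rw [← ENNReal.ofReal_mul (Real.rpow_nonneg (abs_nonneg _) _)]
      apply ENNReal.ofReal_le_ofReal
      have h1 : |v x / lam| ^ p x = |v x| ^ p x / lam ^ p x := by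
        rw [abs_div, abs_of_pos hlam0, Real.div_rpow (abs_nonneg _) hlam0.le]
      rw [h1, div_eq_mul_inv]
      have h2 : lam ^ pm ≤ lam ^ p x :=
        Real.rpow_le_rpow_of_exponent_le hlam1 hx
      exact mul_le_mul_of_nonneg_left
        (inv_anti₀ (Real.rpow_pos_of_pos hlam0 _) h2)
        (Real.rpow_nonneg (abs_nonneg _) _)
    rwa [lintegral_mul_const'' _ hmeas] at this
  refine hbound.trans ?_
  have hMle : M ≤ ENNReal.ofReal (lam ^ pm) := by
    rw [← ENNReal.ofReal_toReal hfin.ne]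
    exact ENNReal.ofReal_le_ofReal hlampm
  have hpos : (0 : ℝ) < lam ^ pm := Real.rpow_pos_of_pos hlam0 _
  rw [ENNReal.ofReal_inv_of_pos hpos]
  calc M * (ENNReal.ofReal (lam ^ pm))⁻¹
      ≤ ENNReal.ofReal (lam ^ pm) * (ENNReal.ofReal (lam ^ pm))⁻¹ := by gcongr
    _ ≤ 1 := ENNReal.mul_inv_le_one _

/-- boundedness of the variable-exponent power operator. -/
theorem power_operator_bound {α : Type*} [MeasurableSpace α] (μ : Measure α)
    (p : α → ℝ) (hp : Measurable p) (pm pp : ℝ) (hpm : 1 < pm) (hmp : pm ≤ pp)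
    (hae : ∀ᵐ x ∂μ, pm ≤ p x ∧ p x ≤ pp)
    (v : α → ℝ) (hv : MemVLp μ p v) :
    MemVLp μ (fun x => p x / (p x - 1)) (fun x => |v x| ^ (p x - 2) * v x) ∧
    luxNorm μ (fun x => p x / (p x - 1)) (fun x => |v x| ^ (p x - 2) * v x)
      ≤ (luxNorm μ p v + 1) ^ (pp - 1) := by
  obtain ⟨hvm, hvfin⟩ := hv
  set Zv : α → ℝ := fun x => |v x| ^ (p x - 2) * v x with hZv
  set q : α → ℝ := fun x => p x / (p x - 1) with hq
  -- measurability of Zv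
  have hZm : AEMeasurable Zv μ :=
    ((measurable_abs.comp_aemeasurable hvm).pow ((hp.sub measurable_const).aemeasurable)).mul hvm
  -- the key pointwise identity
  have hkey : ∀ᵐ x ∂μ, |Zv x| ^ q x = |v x| ^ p x := by
    filter_upwards [hae] with x hx
    have hp1 : (1 : ℝ) < p x := lt_of_lt_of_le hpm hx.1
    have hps : (0 : ℝ) < p x - 1 := by linarith
    have hqpos : (0 : ℝ) < q x := div_pos (by linarith) hps
    rcases eq_or_ne (v x) 0 with h0 | h0
    · simp only [hZv, h0, mul_zero, abs_zero]
      rw [Real.zero_rpow hqpos.ne', Real.zero_rpow (by linarith : p x ≠ 0)]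
    · have habs : (0 : ℝ) < |v x| := abs_pos.mpr h0
      have h1 : |Zv x| = |v x| ^ (p x - 1) := by
        have : |Zv x| = |v x| ^ (p x - 2) * |v x| := by
          rw [hZv, abs_mul, abs_of_nonneg (Real.rpow_nonneg (abs_nonneg _) _)]
        rw [this, ← Real.rpow_add_one habs.ne']
        ring_nf
      rw [h1, ← Real.rpow_mul (abs_nonneg _)]
      congr 1
      show (p x - 1) * (p x / (p x - 1)) = p x
      field_simp
  -- hence the modulars agree
  have hmodeq : vModular μ q Zv = vModular μ p v := by
    refine lintegral_congr_ae ?_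
    filter_upwards [hkey] with x hx
    rw [hx]
  have hZmem : MemVLp μ q Zv := ⟨hZm, by rw [hmodeq]; exact hvfin⟩
  refine ⟨hZmem, ?_⟩
  -- the admissible set for v
  set S : Set ℝ := {lam : ℝ | 0 < lam ∧ vModular μ p (fun x => v x / lam) ≤ 1} with hS
  have hmeasv : AEMeasurable (fun x => ENNReal.ofReal (|v x| ^ p x)) μ :=
    ENNReal.measurable_ofReal.comp_aemeasurable ((measurable_abs.comp_aemeasurable hvm).pow hp.aemeasurable)
  have hSne : S.Nonempty :=
    lux_set_nonempty μ p pm (by linarith) (hae.mono fun x hx => hx.1) v hmeasv hvfin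
  have hSbdd : BddBelow S := ⟨0, fun b hb => hb.1.le⟩
  set N : ℝ := luxNorm μ p v with hN
  have hN0 : 0 ≤ N := le_csInf hSne fun b hb => hb.1.le
  -- pick an admissible lam0 < N + 1
  have hNlt : sInf S < N + 1 := by
    have : sInf S = N := rfl
    linarith
  obtain ⟨lam0, hlam0S, hlam0lt⟩ := (csInf_lt_iff hSbdd hSne).mp hNlt
  -- modular of v / (N+1) is at most 1
  have hmod1 : vModular μ p (fun x => v x / (N + 1)) ≤ 1 := by
    refine le_trans ?_ hlam0S.2
    refine lintegral_mono_ae ?_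
    filter_upwards [hae] with x hx
    apply ENNReal.ofReal_le_ofReal
    apply Real.rpow_le_rpow (abs_nonneg _) ?_ (by linarith [hx.1] : (0:ℝ) ≤ p x)
    rw [abs_div, abs_div, abs_of_pos hlam0S.1, abs_of_pos (by linarith : (0:ℝ) < N + 1)]
    gcongr <;> first
      | exact abs_nonneg _
      | exact hlam0S.1
      | exact hlam0lt.le
  -- the chosen lambda
  set lam : ℝ := (N + 1) ^ (pp - 1) with hlamdef
  have hN1 : (1 : ℝ) ≤ N + 1 := by linarith
  have hlam1 : (1 : ℝ) ≤ lam := Real.one_le_rpow hN1 (by linarith)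
  have hlampos : (0 : ℝ) < lam := lt_of_lt_of_le one_pos hlam1
  -- modular of Zv / lam is at most 1
  have hmod2 : vModular μ q (fun x => Zv x / lam) ≤ 1 := by
    refine le_trans ?_ hmod1
    refine lintegral_mono_ae ?_
    filter_upwards [hae, hkey] with x hx hkx
    apply ENNReal.ofReal_le_ofReal
    have hp1 : (1 : ℝ) < p x := lt_of_lt_of_le hpm hx.1
    have hps : (0 : ℝ) < p x - 1 := by linarith
    have hqpos : (0 : ℝ) < q x := div_pos (by linarith) hps
    have hL : |Zv x / lam| ^ q x = |v x| ^ p x / lam ^ q x := by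
      rw [abs_div, abs_of_pos hlampos, Real.div_rpow (abs_nonneg _) hlampos.le, hkx]
    have hR : |v x / (N + 1)| ^ p x = |v x| ^ p x / (N + 1) ^ p x := by
      rw [abs_div, abs_of_pos (by linarith : (0:ℝ) < N + 1),
        Real.div_rpow (abs_nonneg _) (by linarith : (0:ℝ) ≤ N + 1)]
    rw [hL, hR]
    have hexp : p x ≤ (pp - 1) * q x := by
      have h1 : (pp - 1) * q x = p x * ((pp - 1) / (p x - 1)) := by
        rw [hq]; field_simp
      have h2 : (1 : ℝ) ≤ (pp - 1) / (p x - 1) := by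
        rw [le_div_iff₀ hps]
        linarith [hx.2]
      calc p x = p x * 1 := (mul_one _).symm
        _ ≤ p x * ((pp - 1) / (p x - 1)) := by
            apply mul_le_mul_of_nonneg_left h2 (by linarith)
        _ = (pp - 1) * q x := h1.symm
    have hlq : (N + 1) ^ p x ≤ lam ^ q x := by
      rw [hlamdef, ← Real.rpow_mul (by linarith : (0:ℝ) ≤ N + 1)]
      exact Real.rpow_le_rpow_of_exponent_le hN1 hexp
    gcongr <;> first
      | exact Real.rpow_nonneg (abs_nonneg _) _
      | exact Real.rpow_pos_of_pos (by linarith : (0:ℝ) < N + 1) _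
      | exact hlq
  -- conclude via the infimum
  have : luxNorm μ q Zv ≤ lam := by
    apply csInf_le ⟨0, fun b hb => hb.1.le⟩
    exact ⟨hlampos, hmod2⟩
  exact this
end
end

section
/- Let $\Omega \subseteq \mathbb{R}^N$ be a domain with finite measure, $T > 0$, $Q = \Omega\times(0,T)$, $1 \leq p < \infty$ constant, and $p : \Omega \to [1, p]$, i.e. a variable exponent with $p^+ \leq p$. If $u \in L^{p^+}(0,T; L^{p(x)}(\Omega))$ (Bochner sense) then its space-time representative $P^{-1}u$ belongs to $L^{p(x)}(Q)$ and $\|P^{-1}u\|_{L^{p(x)}(Q)} \leq C\,(\|u\|_{L^{p^+}(0,T;L^{p(x)}(\Omega))} + 1)$ for some constant $C$ depending only on $T$ and $p^\pm$. -/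
open MeasureTheory Filter Set
open scoped ENNReal Topology

noncomputable section

/-- The product measure on the space-time cylinder `Ω × (0,T)`. -/
def QTmeas {N : ℕ} (Ω : Set (Fin N → ℝ)) (T : ℝ) : Measure ((Fin N → ℝ) × ℝ) :=
  (volume.restrict Ω).prod (volume.restrict (Set.Ioo (0:ℝ) T))

section helpers
variable {α : Type*} [MeasurableSpace α] {μ : Measure α} {p : α → ℝ} {pp : ℝ} {v : α → ℝ}

theorem lux_nonneg : 0 ≤ luxNorm μ p v :=
  Real.sInf_nonneg fun _ hx => hx.1.le

theorem lux_set_bdd : BddBelow {lam : ℝ | 0 < lam ∧ vModular μ p (fun x => v x / lam) ≤ 1} :=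
  ⟨0, fun _ hx => hx.1.le⟩

theorem lux_upward (hp : ∀ᵐ x ∂μ, 1 ≤ p x) {a b : ℝ} (ha : 0 < a) (hab : a ≤ b)
    (hma : vModular μ p (fun x => v x / a) ≤ 1) :
    vModular μ p (fun x => v x / b) ≤ 1 := by
  refine le_trans (lintegral_mono_ae ?_) hma
  filter_upwards [hp] with x hx
  apply ENNReal.ofReal_le_ofReal
  apply Real.rpow_le_rpow (abs_nonneg _) ?_ (le_trans zero_le_one hx)
  rw [abs_div, abs_div, abs_of_pos ha, abs_of_pos (lt_of_lt_of_le ha hab)]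
  gcongr

theorem lux_witness (hv : MemVLp μ p v) (hp : ∀ᵐ x ∂μ, 1 ≤ p x) :
    vModular μ p (fun x => v x / ((vModular μ p v).toReal + 1)) ≤ 1 := by
  set m := (vModular μ p v).toReal with hm
  have hm0 : 0 ≤ m := ENNReal.toReal_nonneg
  have hlam : (0:ℝ) < m + 1 := by linarith
  have key : vModular μ p (fun x => v x / (m+1)) ≤ vModular μ p v / ENNReal.ofReal (m+1) := by
    rw [ENNReal.div_eq_inv_mul]
    calc vModular μ p (fun x => v x / (m+1))
        ≤ ∫⁻ x, (ENNReal.ofReal (m+1))⁻¹ * ENNReal.ofReal (|v x| ^ p x) ∂μ := ?_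
      _ = (ENNReal.ofReal (m+1))⁻¹ * vModular μ p v := lintegral_const_mul' _ _ (by simp; linarith)
    refine lintegral_mono_ae ?_
    filter_upwards [hp] with x hx
    rw [← ENNReal.ofReal_inv_of_pos hlam, ← ENNReal.ofReal_mul (by positivity)]
    apply ENNReal.ofReal_le_ofReal
    rw [abs_div, abs_of_pos hlam, Real.div_rpow (abs_nonneg _) hlam.le]
    rw [inv_mul_eq_div]
    gcongr
    calc m + 1 = (m+1) ^ (1:ℝ) := (Real.rpow_one _).symm
    _ ≤ (m+1) ^ p x := Real.rpow_le_rpow_of_exponent_le (by linarith) hx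
  refine key.trans ?_
  apply ENNReal.div_le_of_le_mul
  rw [one_mul]
  calc vModular μ p v = ENNReal.ofReal m := by rw [hm, ENNReal.ofReal_toReal hv.2.ne]
  _ ≤ ENNReal.ofReal (m+1) := ENNReal.ofReal_le_ofReal (by linarith)

theorem modular_div_le_one (hv : MemVLp μ p v) (hp : ∀ᵐ x ∂μ, 1 ≤ p x) {lam : ℝ}
    (hlam : luxNorm μ p v < lam) :
    vModular μ p (fun x => v x / lam) ≤ 1 := by
  have hw : ((vModular μ p v).toReal + 1) ∈
      {lam : ℝ | 0 < lam ∧ vModular μ p (fun x => v x / lam) ≤ 1} :=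
    ⟨by positivity, lux_witness hv hp⟩
  obtain ⟨s, hs, hslt⟩ := (csInf_lt_iff lux_set_bdd ⟨_, hw⟩).mp hlam
  exact lux_upward hp hs.1 hslt.le hs.2

theorem rpow_self_le {r e : ℝ} (hr : 0 < r) (h1 : 1 ≤ e) (h2 : e ≤ pp) :
    r ^ e ≤ r + r ^ pp := by
  rcases le_total r 1 with h | h
  · have : r ^ e ≤ r ^ (1:ℝ) := Real.rpow_le_rpow_of_exponent_ge hr h h1
    rw [Real.rpow_one] at this
    have := Real.rpow_nonneg hr.le pp
    linarith
  · have he : r ^ e ≤ r ^ pp := Real.rpow_le_rpow_of_exponent_le h h2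
    linarith

theorem slice_modular_bound (hv : MemVLp μ p v) (hp : ∀ᵐ x ∂μ, 1 ≤ p x ∧ p x ≤ pp)
    {lam₀ : ℝ} (h0 : 0 < lam₀) :
    vModular μ p (fun x => v x / lam₀) ≤
      ENNReal.ofReal (((luxNorm μ p v + 1) / lam₀) + ((luxNorm μ p v + 1) / lam₀) ^ pp) := by
  set m := luxNorm μ p v with hmdef
  have hm : 0 ≤ m := lux_nonneg
  have hlam : (0:ℝ) < m + 1 := by linarith
  have hmod : vModular μ p (fun x => v x / (m + 1)) ≤ 1 :=
    modular_div_le_one hv (hp.mono fun x hx => hx.1) (lt_add_one m)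
  set r := (m + 1) / lam₀ with hrdef
  have hr : 0 < r := div_pos hlam h0
  have hrpp : 0 ≤ r + r ^ pp := by positivity
  calc vModular μ p (fun x => v x / lam₀)
      ≤ ∫⁻ x, ENNReal.ofReal (r + r ^ pp) * ENNReal.ofReal (|v x / (m+1)| ^ p x) ∂μ := by
        refine lintegral_mono_ae ?_
        filter_upwards [hp] with x hx
        rw [← ENNReal.ofReal_mul hrpp]
        apply ENNReal.ofReal_le_ofReal
        have h1 : v x / lam₀ = (v x / (m+1)) * r := by
          rw [hrdef]; field_simp
        rw [h1, abs_mul, abs_of_pos hr, Real.mul_rpow (abs_nonneg _) hr.le, mul_comm]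
        gcongr ?_ * _
        exact rpow_self_le hr hx.1 hx.2
    _ = ENNReal.ofReal (r + r ^ pp) * vModular μ p (fun x => v x / (m + 1)) :=
        lintegral_const_mul' _ _ ENNReal.ofReal_ne_top
    _ ≤ ENNReal.ofReal (r + r ^ pp) * 1 := by gcongr
    _ = _ := mul_one _

end helpers
section helpers3
variable {pp : ℝ}

theorem meas_rpow : Measurable fun q : ℝ × ℝ => q.1 ^ q.2 := by measurability

theorem r_le_delta {r δ : ℝ} (hr : 0 ≤ r) (hδ : 0 < δ) (hpp : 1 ≤ pp) :
    r ≤ δ + δ ^ (1 - pp) * r ^ pp := by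
  rcases le_or_gt r δ with h | h
  · have : 0 ≤ δ ^ (1 - pp) * r ^ pp := by positivity
    linarith
  · have hr0 : 0 < r := hδ.trans h
    have h1 : r ^ (1 - pp) ≤ δ ^ (1 - pp) :=
      Real.rpow_le_rpow_of_nonpos hδ h.le (by linarith)
    have h2 : r ^ (1 - pp) * r ^ pp = r := by
      rw [← Real.rpow_add hr0]; norm_num
    nlinarith [Real.rpow_nonneg hr0.le pp, Real.rpow_pos_of_pos hr0 pp]

theorem add_one_rpow_le {n : ℝ} (hn : 0 ≤ n) (hpp : 0 ≤ pp) :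
    (n + 1) ^ pp ≤ 2 ^ pp * (n ^ pp + 1) := by
  have hmax : (0:ℝ) < max n 1 := lt_max_of_lt_right one_pos
  have h1 : n + 1 ≤ 2 * max n 1 := by
    rcases le_total n 1 with h | h
    · rw [max_eq_right h]; linarith
    · rw [max_eq_left h]; linarith
  calc (n + 1) ^ pp ≤ (2 * max n 1) ^ pp := Real.rpow_le_rpow (by linarith) h1 hpp
    _ = 2 ^ pp * (max n 1) ^ pp := Real.mul_rpow (by norm_num) hmax.le
    _ ≤ 2 ^ pp * (n ^ pp + 1) := by
        gcongr 2 ^ pp * ?_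
        rcases le_total n 1 with h | h
        · rw [max_eq_right h, Real.one_rpow]
          have := Real.rpow_nonneg hn pp
          linarith
        · rw [max_eq_left h]
          linarith

theorem le_rpow_self_add_one {A : ℝ} (hA : 0 ≤ A) (hpp : 0 < pp) :
    A ≤ (A ^ (1 / pp) + 1) ^ pp := by
  have h0 : 0 ≤ A ^ (1 / pp) := Real.rpow_nonneg hA _
  calc A = (A ^ (1 / pp)) ^ pp := by
        rw [one_div, Real.rpow_inv_rpow hA hpp.ne']
    _ ≤ (A ^ (1 / pp) + 1) ^ pp := Real.rpow_le_rpow h0 (by linarith) hpp.le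

end helpers3
set_option maxHeartbeats 1000000 in
/-- a function of time belonging to the Bochner space
`L^{p⁺}(0,T; L^{p(x)}(Ω))` has its space-time representative in `L^{p(x)}(Q)`, with
`‖P⁻¹u‖_{L^{p(x)}(Q)} ≤ C(‖u‖_{L^{p⁺}(0,T;L^{p(x)}(Ω))} + 1)`. -/
theorem bochner_to_spacetime {N : ℕ} (Ω : Set (Fin N → ℝ)) (hΩ : MeasurableSet Ω)
    (hΩfin : volume Ω < ⊤) (T : ℝ) (hT : 0 < T)
    (pe : (Fin N → ℝ) → ℝ) (hpe : Measurable pe) (pp : ℝ) (h1 : 1 ≤ pp)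
    (hae : ∀ᵐ x ∂(volume.restrict Ω), 1 ≤ pe x ∧ pe x ≤ pp) :
    ∃ C : ℝ, 0 ≤ C ∧
      ∀ u : (Fin N → ℝ) × ℝ → ℝ,
        AEMeasurable u (QTmeas Ω T) →
        (∀ᵐ t ∂(volume.restrict (Set.Ioo (0:ℝ) T)),
          MemVLp (volume.restrict Ω) pe fun x => u (x, t)) →
        IntegrableOn
          (fun t => (luxNorm (volume.restrict Ω) pe fun x => u (x, t)) ^ pp)
          (Set.Ioo (0:ℝ) T) →
        MemVLp (QTmeas Ω T) (fun z => pe z.1) u ∧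
        luxNorm (QTmeas Ω T) (fun z => pe z.1) u
          ≤ C * ((∫ t in Set.Ioo (0:ℝ) T,
              (luxNorm (volume.restrict Ω) pe fun x => u (x, t)) ^ pp) ^ (1 / pp) + 1) := by
  set μΩ := volume.restrict Ω with hμΩdef
  set ν := volume.restrict (Set.Ioo (0:ℝ) T) with hνdef
  haveI hνfin : IsFiniteMeasure ν := by
    constructor
    rw [hνdef, Measure.restrict_apply_univ, Real.volume_Ioo]
    exact ENNReal.ofReal_lt_top
  have hνuniv : (ν Set.univ).toReal = T := by
    rw [hνdef, Measure.restrict_apply_univ, Real.volume_Ioo, sub_zero,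
      ENNReal.toReal_ofReal hT.le]
  have hpp0 : (0:ℝ) < pp := lt_of_lt_of_le one_pos h1
  set δ : ℝ := (4 * (T + 1))⁻¹ with hδdef
  have hδ : 0 < δ := by positivity
  have hδT : δ * T ≤ 1 / 4 := by
    rw [hδdef]
    rw [inv_mul_eq_div, div_le_div_iff₀ (by positivity) (by norm_num)]
    nlinarith
  set Cδ : ℝ := 1 + δ ^ (1 - pp) with hCδdef
  have hCδ : 0 < Cδ := by positivity
  set B : ℝ := 4 * Cδ * 2 ^ pp * (T + 1) with hBdef
  have hB : 0 < B := by positivity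
  set c : ℝ := B ^ (1 / pp) with hcdef
  have hc : 0 < c := Real.rpow_pos_of_pos hB _
  have hcpp : c ^ pp = B := by rw [hcdef, one_div, Real.rpow_inv_rpow hB.le hpp0.ne']
  refine ⟨c, hc.le, ?_⟩
  intro u hu hslice hint
  set n : ℝ → ℝ := fun t => luxNorm μΩ pe fun x => u (x, t) with hndef
  have hn0 : ∀ t, 0 ≤ n t := fun t => lux_nonneg
  set A : ℝ := ∫ t in Set.Ioo (0:ℝ) T, n t ^ pp with hAdef
  have hA0 : 0 ≤ A := integral_nonneg fun t => Real.rpow_nonneg (hn0 t) pp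
  set K : ℝ := A ^ (1 / pp) with hKdef
  have hK0 : 0 ≤ K := Real.rpow_nonneg hA0 _
  have hint' : Integrable (fun t => n t ^ pp) ν := hint
  have hnm : AEMeasurable n ν := by
    have h1m : AEMeasurable (fun t => n t ^ pp) ν :=
      aestronglyMeasurable_iff_aemeasurable.mp hint'.aestronglyMeasurable
    have he : n = fun t => (n t ^ pp) ^ pp⁻¹ := by
      funext t; rw [Real.rpow_rpow_inv (hn0 t) hpp0.ne']
    rw [he]
    exact (meas_rpow.comp (measurable_id.prodMk measurable_const)).comp_aemeasurable h1m
  have hint1 : Integrable (fun t => (n t + 1) ^ pp) ν := by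
    refine Integrable.mono' ((hint'.add (integrable_const 1)).const_mul (2 ^ pp)) ?_ ?_
    · exact (meas_rpow.comp_aemeasurable
        (((hnm.add_const 1)).prodMk aemeasurable_const)).aestronglyMeasurable
    · refine Eventually.of_forall fun t => ?_
      rw [Real.norm_eq_abs, abs_of_nonneg (Real.rpow_nonneg (by linarith [hn0 t]) pp)]
      exact add_one_rpow_le (hn0 t) hpp0.le
  have hIle : ∫ t, (n t + 1) ^ pp ∂ν ≤ 2 ^ pp * (A + T) := by
    calc ∫ t, (n t + 1) ^ pp ∂ν ≤ ∫ t, 2 ^ pp * (n t ^ pp + 1) ∂ν := by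
          refine integral_mono hint1 ((hint'.add (integrable_const 1)).const_mul (2 ^ pp))
            fun t => ?_
          exact add_one_rpow_le (hn0 t) hpp0.le
      _ = 2 ^ pp * ((∫ t, n t ^ pp ∂ν) + (ν Set.univ).toReal • (1:ℝ)) := by
          rw [integral_const_mul, integral_add hint' (integrable_const 1), integral_const, measureReal_def]
      _ = 2 ^ pp * (A + T) := by rw [hνuniv, smul_eq_mul, mul_one]
  have hprod : ∀ lam₀ : ℝ,
      vModular (QTmeas Ω T) (fun z => pe z.1) (fun z => u z / lam₀)
        = ∫⁻ t, vModular μΩ pe (fun x => u (x, t) / lam₀) ∂ν := by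
    intro lam₀
    have habs : AEMeasurable (fun z => |u z / lam₀|) (QTmeas Ω T) := by fun_prop
    have hmeas : AEMeasurable
        (fun z : (Fin N → ℝ) × ℝ => ENNReal.ofReal (|u z / lam₀| ^ pe z.1)) (QTmeas Ω T) :=
      ENNReal.measurable_ofReal.comp_aemeasurable
        (meas_rpow.comp_aemeasurable (habs.prodMk (hpe.comp measurable_fst).aemeasurable))
    exact lintegral_prod_symm _ hmeas
  have hslicebd : ∀ lam₀ : ℝ, 0 < lam₀ → ∀ᵐ t ∂ν,
      vModular μΩ pe (fun x => u (x, t) / lam₀)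
        ≤ ENNReal.ofReal ((n t + 1) / lam₀ + ((n t + 1) / lam₀) ^ pp) := by
    intro lam₀ h0
    filter_upwards [hslice] with t ht
    exact slice_modular_bound ht hae h0
  have hmem : MemVLp (QTmeas Ω T) (fun z => pe z.1) u := by
    refine ⟨hu, ?_⟩
    have e1 : vModular (QTmeas Ω T) (fun z => pe z.1) u
        = vModular (QTmeas Ω T) (fun z => pe z.1) (fun z => u z / 1) := by simp
    rw [e1, hprod 1]
    calc ∫⁻ t, vModular μΩ pe (fun x => u (x, t) / 1) ∂ν
        ≤ ∫⁻ t, ENNReal.ofReal ((n t + 1) / 1 + ((n t + 1) / 1) ^ pp) ∂ν :=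
          lintegral_mono_ae (hslicebd 1 one_pos)
      _ ≤ ∫⁻ t, ENNReal.ofReal (2 * (n t + 1) ^ pp) ∂ν := by
          refine lintegral_mono fun t => ENNReal.ofReal_le_ofReal ?_
          rw [div_one]
          have h2 : n t + 1 ≤ (n t + 1) ^ pp := by
            calc n t + 1 = (n t + 1) ^ (1:ℝ) := (Real.rpow_one _).symm
              _ ≤ _ := Real.rpow_le_rpow_of_exponent_le (by linarith [hn0 t]) h1
          linarith
      _ = ENNReal.ofReal (∫ t, 2 * (n t + 1) ^ pp ∂ν) := by
          refine (ofReal_integral_eq_lintegral_ofReal (hint1.const_mul 2) ?_).symm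
          exact Eventually.of_forall fun t =>
            mul_nonneg (by norm_num) (Real.rpow_nonneg (by linarith [hn0 t]) _)
      _ < ⊤ := ENNReal.ofReal_lt_top
  set lam₀ : ℝ := c * (K + 1) with hlamdef
  have hlam0 : 0 < lam₀ := by positivity
  have hW : (0:ℝ) < (K + 1) ^ pp := Real.rpow_pos_of_pos (by linarith) _
  have hKpp : A + T ≤ (T + 1) * (K + 1) ^ pp := by
    have e1 : A ≤ (K + 1) ^ pp := le_rpow_self_add_one hA0 hpp0
    have e2 : (1:ℝ) ≤ (K + 1) ^ pp := by
      calc (1:ℝ) = 1 ^ pp := (Real.one_rpow pp).symm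
        _ ≤ (K + 1) ^ pp := Real.rpow_le_rpow zero_le_one (by linarith) hpp0.le
    nlinarith
  have hlampp : lam₀ ^ pp = B * (K + 1) ^ pp := by
    rw [hlamdef, Real.mul_rpow hc.le (by linarith), hcpp]
  have hkey : vModular (QTmeas Ω T) (fun z => pe z.1) (fun z => u z / lam₀) ≤ 1 := by
    rw [hprod lam₀]
    have hg : ∀ᵐ t ∂ν, vModular μΩ pe (fun x => u (x, t) / lam₀)
        ≤ ENNReal.ofReal (δ + Cδ * ((n t + 1) ^ pp / lam₀ ^ pp)) := by
      filter_upwards [hslicebd lam₀ hlam0] with t ht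
      refine ht.trans (ENNReal.ofReal_le_ofReal ?_)
      have hr0 : 0 ≤ (n t + 1) / lam₀ := div_nonneg (by linarith [hn0 t]) hlam0.le
      have h1' : (n t + 1) / lam₀ ≤ δ + δ ^ (1 - pp) * ((n t + 1) / lam₀) ^ pp :=
        r_le_delta hr0 hδ h1
      have h2' : ((n t + 1) / lam₀) ^ pp = (n t + 1) ^ pp / lam₀ ^ pp :=
        Real.div_rpow (add_nonneg (hn0 t) zero_le_one) hlam0.le pp
      rw [← h2', hCδdef]
      nlinarith [Real.rpow_nonneg hr0 pp]
    have hintg : Integrable (fun t => δ + Cδ * ((n t + 1) ^ pp / lam₀ ^ pp)) ν :=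
      (integrable_const δ).add ((hint1.div_const _).const_mul _)
    calc ∫⁻ t, vModular μΩ pe (fun x => u (x, t) / lam₀) ∂ν
        ≤ ∫⁻ t, ENNReal.ofReal (δ + Cδ * ((n t + 1) ^ pp / lam₀ ^ pp)) ∂ν :=
          lintegral_mono_ae hg
      _ = ENNReal.ofReal (∫ t, (δ + Cδ * ((n t + 1) ^ pp / lam₀ ^ pp)) ∂ν) := by
          refine (ofReal_integral_eq_lintegral_ofReal hintg ?_).symm
          refine Eventually.of_forall fun t => ?_
          show (0:ℝ) ≤ δ + Cδ * ((n t + 1) ^ pp / lam₀ ^ pp)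
          have h1'' : 0 ≤ (n t + 1) ^ pp := Real.rpow_nonneg (by linarith [hn0 t]) _
          have h2'' : 0 ≤ (n t + 1) ^ pp / lam₀ ^ pp := by positivity
          nlinarith [hCδ.le]
      _ ≤ ENNReal.ofReal 1 := by
          apply ENNReal.ofReal_le_ofReal
          have hsplit : ∫ t, (δ + Cδ * ((n t + 1) ^ pp / lam₀ ^ pp)) ∂ν
              = δ * T + Cδ / lam₀ ^ pp * ∫ t, (n t + 1) ^ pp ∂ν := by
            rw [integral_add (integrable_const δ) ((hint1.div_const _).const_mul _),
              integral_const, measureReal_def, hνuniv, smul_eq_mul, integral_const_mul, integral_div]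
            ring
          rw [hsplit]
          have hterm2 : Cδ / lam₀ ^ pp * ∫ t, (n t + 1) ^ pp ∂ν ≤ 1 / 4 := by
            have hpos : 0 < lam₀ ^ pp := Real.rpow_pos_of_pos hlam0 _
            have hIle2 : ∫ t, (n t + 1) ^ pp ∂ν ≤ 2 ^ pp * ((T + 1) * (K + 1) ^ pp) := by
              refine hIle.trans ?_
              have h2p : (0:ℝ) < 2 ^ pp := Real.rpow_pos_of_pos (by norm_num) _
              nlinarith
            calc Cδ / lam₀ ^ pp * ∫ t, (n t + 1) ^ pp ∂ν
                ≤ Cδ / lam₀ ^ pp * (2 ^ pp * ((T + 1) * (K + 1) ^ pp)) := by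
                  apply mul_le_mul_of_nonneg_left hIle2 (by positivity)
              _ = 1 / 4 := by
                  rw [hlampp, hBdef]
                  have h2p : (0:ℝ) < 2 ^ pp := Real.rpow_pos_of_pos (by norm_num) _
                  field_simp
          linarith
      _ = 1 := ENNReal.ofReal_one
  refine ⟨hmem, ?_⟩
  exact csInf_le lux_set_bdd ⟨hlam0, hkey⟩
end
end

section
/- Let $V = L^{p(x)}(\Omega)$ with $1 < p^- \leq p^+ < \infty$, and let $A \subseteq V \times V^*$ be a maximal monotone operator. For $\lambda > 0$ define the modified resolvent $J_\lambda u := u_\lambda$, the unique solution of $Z_\Omega((u_\lambda - u)/\lambda) + A(u_\lambda) \ni 0$, and the modified Yosida approximation $A_\lambda(u) := Z_\Omega((u - J_\lambda u)/\lambda)$, where $(Z_\Omega v)(x) = |v(x)|^{p(x)-2}v(x)$. Then for every $[u,\eta] \in A$ and every $\lambda > 0$: $\int_\Omega \frac{1}{p'(x)}|A_\lambda u(x)|^{p'(x)}\,dx \leq \int_\Omega \frac{1}{p'(x)}|\eta(x)|^{p'(x)}\,dx$. -/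
open MeasureTheory Filter Set
open scoped ENNReal Topology

noncomputable section

/-- Pointwise identities for the Yosida integrand. -/
lemma yosida_pt {w q : ℝ} (hq : 1 < q) :
    |(|w| ^ (q - 2) * w)| ^ (q / (q - 1)) = |w| ^ q ∧
      (|w| ^ (q - 2) * w) * w = |w| ^ q := by
  have hq0 : (0:ℝ) < q := lt_trans one_pos hq
  have hq1 : q - 1 ≠ 0 := by linarith
  rcases eq_or_ne w 0 with h | h
  · subst h
    have h1 : q / (q - 1) ≠ 0 := div_ne_zero hq0.ne' hq1
    simp [Real.zero_rpow hq0.ne', Real.zero_rpow h1]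
  · have hw : 0 < |w| := abs_pos.mpr h
    constructor
    · have h1 : |(|w| ^ (q - 2) * w)| = |w| ^ (q - 1) := by
        rw [abs_mul, abs_of_nonneg (Real.rpow_nonneg (abs_nonneg w) _),
          ← Real.rpow_add_one hw.ne' (q - 2)]
        congr 1
        ring
      rw [h1, ← Real.rpow_mul (abs_nonneg w)]
      congr 1
      field_simp
    · have h2 : w * w = |w| ^ (2:ℝ) := by
        rw [show ((2:ℝ)) = ((2:ℕ):ℝ) by norm_num, Real.rpow_natCast, sq_abs, sq]
      calc (|w| ^ (q - 2) * w) * w = |w| ^ (q - 2) * (w * w) := by ring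
        _ = |w| ^ (q - 2) * |w| ^ (2:ℝ) := by rw [h2]
        _ = |w| ^ q := by rw [← Real.rpow_add hw]; ring_nf

/-- Nonnegative a.e.-measurable functions with finite `ofReal`-lintegral are integrable. -/
lemma integrable_of_lintegral_lt_top' {α : Type*} [MeasurableSpace α] {μ : Measure α} {f : α → ℝ}
    (hm : AEMeasurable f μ) (hnn : 0 ≤ᵐ[μ] f) (hfin : ∫⁻ x, ENNReal.ofReal (f x) ∂μ < ⊤) :
    Integrable f μ :=
  ⟨hm.aestronglyMeasurable, (hasFiniteIntegral_iff_ofReal hnn).2 hfin⟩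

/-- modular bound for the modified Yosida approximation
`A_λ u = Z((u - J_λ u)/λ)` of a monotone operator `A`:
`∫ |A_λ u|^{p'(x)}/p'(x) ≤ ∫ |η|^{p'(x)}/p'(x)` whenever `[u,η] ∈ A`. -/
theorem yosida_modular_bound {α : Type*} [MeasurableSpace α] (μ : Measure α)
    (p : α → ℝ) (hp : Measurable p) (pm pp : ℝ) (h1 : 1 < pm) (hmp : pm ≤ pp)
    (hae : ∀ᵐ x ∂μ, pm ≤ p x ∧ p x ≤ pp)
    (A : Set ((α → ℝ) × (α → ℝ)))
    (hmono : ∀ q ∈ A, ∀ r ∈ A, 0 ≤ ∫ x, (q.2 x - r.2 x) * (q.1 x - r.1 x) ∂μ)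
    (lam : ℝ) (hlam : 0 < lam)
    (u η ulam : α → ℝ)
    (hu : MemVLp μ p u) (hul : MemVLp μ p ulam)
    (hη : MemVLp μ (fun x => p x / (p x - 1)) η)
    (huA : (u, η) ∈ A)
    (hres : (ulam,
        fun x => |(u x - ulam x) / lam| ^ (p x - 2) * ((u x - ulam x) / lam)) ∈ A) :
    (∫⁻ x, ENNReal.ofReal (((p x - 1) / p x) *
        |(|(u x - ulam x) / lam| ^ (p x - 2) * ((u x - ulam x) / lam))|
          ^ (p x / (p x - 1))) ∂μ)
      ≤ ∫⁻ x, ENNReal.ofReal (((p x - 1) / p x) * |η x| ^ (p x / (p x - 1))) ∂μ := by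
  classical
  -- abbreviations (as plain functions, stated via `have` equalities)
  have hvm : AEMeasurable (fun x => (u x - ulam x) / lam) μ := (hu.1.sub hul.1).div_const lam
  have habsm : ∀ {f : α → ℝ}, AEMeasurable f μ → AEMeasurable (fun x => |f x|) μ :=
    fun hf => continuous_abs.measurable.comp_aemeasurable hf
  have hpae : AEMeasurable p μ := hp.aemeasurable
  have hvpm : AEMeasurable (fun x => |(u x - ulam x) / lam| ^ p x) μ := (habsm hvm).pow hpae
  have hqm : Measurable (fun x => p x / (p x - 1)) := hp.div (hp.sub measurable_const)
  have hηqm : AEMeasurable (fun x => |η x| ^ (p x / (p x - 1))) μ := (habsm hη.1).pow hqm.aemeasurable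
  have hcm : Measurable (fun x => (p x - 1) / p x) := (hp.sub measurable_const).div hp
  -- Step A : finiteness of the modular of v = (u - ulam)/lam
  have hvfin : ∫⁻ x, ENNReal.ofReal (|(u x - ulam x) / lam| ^ p x) ∂μ < ⊤ := by
    set c : ℝ := 2 * max 1 lam⁻¹ with hc
    have hc1 : (1:ℝ) ≤ c := by
      have h1' : (1:ℝ) ≤ max 1 lam⁻¹ := le_max_left _ _
      nlinarith
    have hbound : ∀ᵐ x ∂μ, ENNReal.ofReal (|(u x - ulam x) / lam| ^ p x) ≤
        ENNReal.ofReal (c ^ pp) *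
          (ENNReal.ofReal (|u x| ^ p x) + ENNReal.ofReal (|ulam x| ^ p x)) := by
      filter_upwards [hae] with x hx
      obtain ⟨h1x, h2x⟩ := hx
      have hp0 : (0:ℝ) ≤ p x := by linarith
      have hM0 : (0:ℝ) ≤ max |u x| |ulam x| := le_max_of_le_left (abs_nonneg _)
      have hvb : |(u x - ulam x) / lam| ≤ c * max |u x| |ulam x| := by
        have e1 : |(u x - ulam x) / lam| = |u x - ulam x| * lam⁻¹ := by
          rw [abs_div, abs_of_pos hlam, div_eq_mul_inv]
        have e2 : |u x - ulam x| ≤ |u x| + |ulam x| := abs_sub _ _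
        have e3 : |u x| + |ulam x| ≤ 2 * max |u x| |ulam x| := by
          have := le_max_left |u x| |ulam x|
          have := le_max_right |u x| |ulam x|
          linarith
        have e4 : lam⁻¹ ≤ max 1 lam⁻¹ := le_max_right _ _
        have e5 : (0:ℝ) < lam⁻¹ := inv_pos.2 hlam
        calc |(u x - ulam x) / lam| = |u x - ulam x| * lam⁻¹ := e1
          _ ≤ (2 * max |u x| |ulam x|) * (max 1 lam⁻¹) := by
              apply mul_le_mul (le_trans e2 e3) e4 e5.le (by linarith)
          _ = c * max |u x| |ulam x| := by rw [hc]; ring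
      have hrb : |(u x - ulam x) / lam| ^ p x ≤ c ^ pp * (|u x| ^ p x + |ulam x| ^ p x) := by
        have s1 : |(u x - ulam x) / lam| ^ p x ≤ (c * max |u x| |ulam x|) ^ p x :=
          Real.rpow_le_rpow (abs_nonneg _) hvb hp0
        have s2 : (c * max |u x| |ulam x|) ^ p x =
            c ^ p x * (max |u x| |ulam x|) ^ p x :=
          Real.mul_rpow (by linarith) hM0
        have s3 : c ^ p x ≤ c ^ pp := Real.rpow_le_rpow_of_exponent_le hc1 h2x
        have s4 : (max |u x| |ulam x|) ^ p x ≤ |u x| ^ p x + |ulam x| ^ p x := by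
          rcases le_total |u x| |ulam x| with hle | hle
          · rw [max_eq_right hle]
            have := Real.rpow_nonneg (abs_nonneg (u x)) (p x)
            linarith
          · rw [max_eq_left hle]
            have := Real.rpow_nonneg (abs_nonneg (ulam x)) (p x)
            linarith
        have hMp0 : (0:ℝ) ≤ (max |u x| |ulam x|) ^ p x := Real.rpow_nonneg hM0 _
        have hcp0 : (0:ℝ) ≤ c ^ pp := Real.rpow_nonneg (by linarith) _
        calc |(u x - ulam x) / lam| ^ p x ≤ c ^ p x * (max |u x| |ulam x|) ^ p x := by
              rw [← s2]; exact s1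
          _ ≤ c ^ pp * (max |u x| |ulam x|) ^ p x := mul_le_mul_of_nonneg_right s3 hMp0
          _ ≤ c ^ pp * (|u x| ^ p x + |ulam x| ^ p x) := mul_le_mul_of_nonneg_left s4 hcp0
      calc ENNReal.ofReal (|(u x - ulam x) / lam| ^ p x)
          ≤ ENNReal.ofReal (c ^ pp * (|u x| ^ p x + |ulam x| ^ p x)) :=
            ENNReal.ofReal_le_ofReal hrb
        _ = ENNReal.ofReal (c ^ pp) *
            (ENNReal.ofReal (|u x| ^ p x) + ENNReal.ofReal (|ulam x| ^ p x)) := by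
            rw [ENNReal.ofReal_mul (Real.rpow_nonneg (by linarith) _),
              ENNReal.ofReal_add (Real.rpow_nonneg (abs_nonneg _) _)
                (Real.rpow_nonneg (abs_nonneg _) _)]
    calc ∫⁻ x, ENNReal.ofReal (|(u x - ulam x) / lam| ^ p x) ∂μ
        ≤ ∫⁻ x, ENNReal.ofReal (c ^ pp) *
            (ENNReal.ofReal (|u x| ^ p x) + ENNReal.ofReal (|ulam x| ^ p x)) ∂μ :=
          lintegral_mono_ae hbound
      _ = ENNReal.ofReal (c ^ pp) *
            ∫⁻ x, (ENNReal.ofReal (|u x| ^ p x) + ENNReal.ofReal (|ulam x| ^ p x)) ∂μ :=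
          lintegral_const_mul' _ _ ENNReal.ofReal_ne_top
      _ = ENNReal.ofReal (c ^ pp) *
            ((∫⁻ x, ENNReal.ofReal (|u x| ^ p x) ∂μ) +
              ∫⁻ x, ENNReal.ofReal (|ulam x| ^ p x) ∂μ) := by
          rw [lintegral_add_left' (((habsm hu.1).pow hpae).ennreal_ofReal)]
      _ < ⊤ := ENNReal.mul_lt_top ENNReal.ofReal_lt_top (ENNReal.add_lt_top.2 ⟨hu.2, hul.2⟩)
  -- integrability facts
  have hInt_vp : Integrable (fun x => |(u x - ulam x) / lam| ^ p x) μ :=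
    integrable_of_lintegral_lt_top' hvpm
      (Eventually.of_forall fun x => Real.rpow_nonneg (abs_nonneg _) _) hvfin
  have hInt_ηq : Integrable (fun x => |η x| ^ (p x / (p x - 1))) μ :=
    integrable_of_lintegral_lt_top' hηqm
      (Eventually.of_forall fun x => Real.rpow_nonneg (abs_nonneg _) _) hη.2
  have hcae : ∀ᵐ x ∂μ, 0 ≤ (p x - 1) / p x ∧ (p x - 1) / p x ≤ 1 := by
    filter_upwards [hae] with x hx
    obtain ⟨h1x, _⟩ := hx
    have hp0 : (0:ℝ) < p x := by linarith
    exact ⟨div_nonneg (by linarith) hp0.le, by rw [div_le_one hp0]; linarith⟩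
  have hIf : Integrable (fun x => ((p x - 1) / p x) * |(u x - ulam x) / lam| ^ p x) μ := by
    refine hInt_vp.mono' (hcm.aemeasurable.mul hvpm).aestronglyMeasurable ?_
    filter_upwards [hcae] with x hx
    obtain ⟨h0, h1'⟩ := hx
    rw [Real.norm_eq_abs, abs_mul, abs_of_nonneg h0,
      abs_of_nonneg (Real.rpow_nonneg (abs_nonneg _) _)]
    exact mul_le_of_le_one_left (Real.rpow_nonneg (abs_nonneg _) _) h1'
  have hIg : Integrable (fun x => ((p x - 1) / p x) * |η x| ^ (p x / (p x - 1))) μ := by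
    refine hInt_ηq.mono' (hcm.aemeasurable.mul hηqm).aestronglyMeasurable ?_
    filter_upwards [hcae] with x hx
    obtain ⟨h0, h1'⟩ := hx
    rw [Real.norm_eq_abs, abs_mul, abs_of_nonneg h0,
      abs_of_nonneg (Real.rpow_nonneg (abs_nonneg _) _)]
    exact mul_le_of_le_one_left (Real.rpow_nonneg (abs_nonneg _) _) h1'
  -- conjugate exponent facts, a.e.
  have hconj : ∀ᵐ x ∂μ, (p x).HolderConjugate (p x / (p x - 1)) := by
    filter_upwards [hae] with x hx
    exact (Real.holderConjugate_iff_eq_conjExponent (lt_of_lt_of_le h1 hx.1)).2 rfl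
  -- integrability of h x = η x * v x - |v x|^{p x}
  have hIh : Integrable (fun x =>
      η x * ((u x - ulam x) / lam) - |(u x - ulam x) / lam| ^ p x) μ := by
    refine Integrable.mono' ((hInt_vp.const_mul 2).add hInt_ηq)
      ((hη.1.mul hvm).sub hvpm).aestronglyMeasurable ?_
    filter_upwards [hconj] with x hpq
    have hy := Real.young_inequality_of_nonneg (abs_nonneg ((u x - ulam x) / lam))
      (abs_nonneg (η x)) hpq
    have hp1 : (1:ℝ) ≤ p x := hpq.lt.le
    have hq1 : (1:ℝ) ≤ p x / (p x - 1) := hpq.symm.lt.le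
    have hv0 : (0:ℝ) ≤ |(u x - ulam x) / lam| ^ p x := Real.rpow_nonneg (abs_nonneg _) _
    have hη0 : (0:ℝ) ≤ |η x| ^ (p x / (p x - 1)) := Real.rpow_nonneg (abs_nonneg _) _
    have d1 : |(u x - ulam x) / lam| ^ p x / p x ≤ |(u x - ulam x) / lam| ^ p x :=
      div_le_self hv0 hp1
    have d2 : |η x| ^ (p x / (p x - 1)) / (p x / (p x - 1)) ≤ |η x| ^ (p x / (p x - 1)) :=
      div_le_self hη0 hq1
    have habs : |η x * ((u x - ulam x) / lam)| = |(u x - ulam x) / lam| * |η x| := by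
      rw [abs_mul]; ring
    rw [Real.norm_eq_abs]
    have tri : |η x * ((u x - ulam x) / lam) - |(u x - ulam x) / lam| ^ p x| ≤
        |η x * ((u x - ulam x) / lam)| + |(u x - ulam x) / lam| ^ p x := by
      have := abs_sub (η x * ((u x - ulam x) / lam)) (|(u x - ulam x) / lam| ^ p x)
      rwa [abs_of_nonneg hv0] at this
    rw [habs] at tri
    simp only [Pi.add_apply]
    linarith
  -- monotonicity gives 0 ≤ ∫ h
  have h0 : 0 ≤ ∫ x, (η x - |(u x - ulam x) / lam| ^ (p x - 2) * ((u x - ulam x) / lam)) *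
      (u x - ulam x) ∂μ := by
    simpa using hmono (u, η) huA _ hres
  have hint : 0 ≤ ∫ x,
      (η x * ((u x - ulam x) / lam) - |(u x - ulam x) / lam| ^ p x) ∂μ := by
    have hcongr : ∫ x, (η x - |(u x - ulam x) / lam| ^ (p x - 2) * ((u x - ulam x) / lam)) *
        (u x - ulam x) ∂μ =
        ∫ x, lam * (η x * ((u x - ulam x) / lam) - |(u x - ulam x) / lam| ^ p x) ∂μ := by
      apply integral_congr_ae
      filter_upwards [hae] with x hx
      have hp1 : (1:ℝ) < p x := lt_of_lt_of_le h1 hx.1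
      have hkey := (yosida_pt (w := (u x - ulam x) / lam) hp1).2
      have he : u x - ulam x = lam * ((u x - ulam x) / lam) := (mul_div_cancel₀ _ hlam.ne').symm
      calc (η x - |(u x - ulam x) / lam| ^ (p x - 2) * ((u x - ulam x) / lam)) * (u x - ulam x)
          = (η x - |(u x - ulam x) / lam| ^ (p x - 2) * ((u x - ulam x) / lam)) *
            (lam * ((u x - ulam x) / lam)) := by rw [← he]
        _ = lam * (η x * ((u x - ulam x) / lam) -
            (|(u x - ulam x) / lam| ^ (p x - 2) * ((u x - ulam x) / lam)) *
              ((u x - ulam x) / lam)) := by ring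
        _ = lam * (η x * ((u x - ulam x) / lam) - |(u x - ulam x) / lam| ^ p x) := by
            rw [hkey]
    rw [hcongr, integral_const_mul] at h0
    exact le_of_mul_le_mul_left (by simpa using h0) hlam
  -- pointwise Young inequality : f + h ≤ g a.e.
  have hfh : ∀ᵐ x ∂μ,
      ((p x - 1) / p x) * |(u x - ulam x) / lam| ^ p x +
        (η x * ((u x - ulam x) / lam) - |(u x - ulam x) / lam| ^ p x) ≤
      ((p x - 1) / p x) * |η x| ^ (p x / (p x - 1)) := by
    filter_upwards [hconj] with x hpq
    have hy := Real.young_inequality (η x) ((u x - ulam x) / lam) hpq.symm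
    -- hy : η x * v x ≤ |η x| ^ q / q + |v x| ^ p / p
    have hp0 : (0:ℝ) < p x := hpq.pos
    have hq0 : (0:ℝ) < p x / (p x - 1) := hpq.symm.pos
    have e1 : |η x| ^ (p x / (p x - 1)) / (p x / (p x - 1)) =
        ((p x - 1) / p x) * |η x| ^ (p x / (p x - 1)) := by
      rw [div_eq_mul_inv, inv_div]; ring
    have e2 : ((p x - 1) / p x) * |(u x - ulam x) / lam| ^ p x -
        |(u x - ulam x) / lam| ^ p x = -(|(u x - ulam x) / lam| ^ p x / p x) := by
      field_simp
      ring
    rw [e1] at hy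
    linarith
  -- combine: real integral inequality
  have hfg : (∫ x, ((p x - 1) / p x) * |(u x - ulam x) / lam| ^ p x ∂μ) ≤
      ∫ x, ((p x - 1) / p x) * |η x| ^ (p x / (p x - 1)) ∂μ := by
    have hsum := integral_add hIf hIh
    calc (∫ x, ((p x - 1) / p x) * |(u x - ulam x) / lam| ^ p x ∂μ)
        ≤ (∫ x, ((p x - 1) / p x) * |(u x - ulam x) / lam| ^ p x ∂μ) +
          ∫ x, (η x * ((u x - ulam x) / lam) - |(u x - ulam x) / lam| ^ p x) ∂μ :=
          le_add_of_nonneg_right hint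
      _ = ∫ x, (((p x - 1) / p x) * |(u x - ulam x) / lam| ^ p x +
            (η x * ((u x - ulam x) / lam) - |(u x - ulam x) / lam| ^ p x)) ∂μ := hsum.symm
      _ ≤ ∫ x, ((p x - 1) / p x) * |η x| ^ (p x / (p x - 1)) ∂μ :=
          integral_mono_ae (hIf.add hIh) hIg hfh
  -- nonnegativity a.e. of f and g
  have hf0 : 0 ≤ᵐ[μ] fun x => ((p x - 1) / p x) * |(u x - ulam x) / lam| ^ p x := by
    filter_upwards [hcae] with x hx
    exact mul_nonneg hx.1 (Real.rpow_nonneg (abs_nonneg _) _)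
  have hg0 : 0 ≤ᵐ[μ] fun x => ((p x - 1) / p x) * |η x| ^ (p x / (p x - 1)) := by
    filter_upwards [hcae] with x hx
    exact mul_nonneg hx.1 (Real.rpow_nonneg (abs_nonneg _) _)
  -- rewrite the LHS integrand
  have hLHS : (∫⁻ x, ENNReal.ofReal (((p x - 1) / p x) *
        |(|(u x - ulam x) / lam| ^ (p x - 2) * ((u x - ulam x) / lam))|
          ^ (p x / (p x - 1))) ∂μ) =
      ∫⁻ x, ENNReal.ofReal (((p x - 1) / p x) * |(u x - ulam x) / lam| ^ p x) ∂μ := by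
    apply lintegral_congr_ae
    filter_upwards [hae] with x hx
    rw [(yosida_pt (w := (u x - ulam x) / lam) (lt_of_lt_of_le h1 hx.1)).1]
  rw [hLHS, ← ofReal_integral_eq_lintegral_ofReal hIf hf0,
    ← ofReal_integral_eq_lintegral_ofReal hIg hg0]
  exact ENNReal.ofReal_le_ofReal hfg
end
end
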